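/- Let R be a d×d real symmetric positive semidefinite matrix with strictly positive diagonal entries, let δ > 0, and set R_RR = R + δI. Let C = Σ⁻¹ R Σ⁻¹ and C_RR = Σ_RR⁻¹ R_RR Σ_RR⁻¹ be the correlation matrices of R and R_RR respectively. Then C_RR(i,i) = 1 for every i, and for every pair i ≠ j with C(i,j) ≠ 0, the absolute value of the off-diagonal correlation strictly decreases: |C_RR(i,j)| < |C(i,j)|. -/

import Mathlib

open Matrix BigOperators

/-- ridge regression keeps unit diagonal correlations and strictly
decreases the absolute value of every nonzero off-diagonal correlation. -/
theorem ridge_regression_decreases_offdiagonal_correlations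
    {d : ℕ} (R : Matrix (Fin d) (Fin d) ℝ) (hR : R.PosSemidef)
    (hdiag : ∀ i, 0 < R i i) (δ : ℝ) (hδ : 0 < δ)
    (RRR Sg SgRR C CRR : Matrix (Fin d) (Fin d) ℝ)
    (hRRR : RRR = R + δ • (1 : Matrix (Fin d) (Fin d) ℝ))
    (hSg : Sg = Matrix.diagonal fun i => Real.sqrt (R i i))
    (hSgRR : SgRR = Matrix.diagonal fun i => Real.sqrt (RRR i i))
    (hC : C = Sg⁻¹ * R * Sg⁻¹)
    (hCRR : CRR = SgRR⁻¹ * RRR * SgRR⁻¹) :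
    (∀ i, CRR i i = 1) ∧
      (∀ i j, i ≠ j → C i j ≠ 0 → |CRR i j| < |C i j|) := by
  have hRRRentry : ∀ i j, RRR i j = R i j + if i = j then δ else 0 := by
    intro i j
    simp [hRRR, Matrix.one_apply, mul_ite]
  have hRRRdiag : ∀ i, RRR i i = R i i + δ := by
    intro i; simp [hRRRentry]
  have hpos : ∀ i, 0 < RRR i i := fun i => by
    have := hdiag i; rw [hRRRdiag]; linarith
  have hSginv : Sg⁻¹ = Matrix.diagonal fun i => (Real.sqrt (R i i))⁻¹ := by
    apply Matrix.inv_eq_left_inv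
    rw [hSg, Matrix.diagonal_mul_diagonal]
    convert Matrix.diagonal_one with i
    exact inv_mul_cancel₀ (ne_of_gt (Real.sqrt_pos.2 (hdiag i)))
  have hSgRRinv : SgRR⁻¹ = Matrix.diagonal fun i => (Real.sqrt (RRR i i))⁻¹ := by
    apply Matrix.inv_eq_left_inv
    rw [hSgRR, Matrix.diagonal_mul_diagonal]
    convert Matrix.diagonal_one with i
    exact inv_mul_cancel₀ (ne_of_gt (Real.sqrt_pos.2 (hpos i)))
  have hCentry : ∀ i j, C i j = (Real.sqrt (R i i))⁻¹ * R i j * (Real.sqrt (R j j))⁻¹ := by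
    intro i j
    simp [hC, hSginv, Matrix.diagonal_mul, Matrix.mul_diagonal]
  have hCRRentry : ∀ i j, CRR i j =
      (Real.sqrt (RRR i i))⁻¹ * RRR i j * (Real.sqrt (RRR j j))⁻¹ := by
    intro i j
    simp [hCRR, hSgRRinv, Matrix.diagonal_mul, Matrix.mul_diagonal]
  constructor
  · intro i
    rw [hCRRentry]
    have h := hpos i
    have hs : Real.sqrt (RRR i i) ≠ 0 := by positivity
    rw [← Real.sqrt_mul_self h.le]
    have hs' : Real.sqrt (RRR i i) ≠ 0 := ne_of_gt (Real.sqrt_pos.2 h)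
    field_simp
    rw [Real.sq_sqrt (Real.sqrt_nonneg _)]
  · intro i j hij hne
    have hRij : R i j ≠ 0 := by
      intro h
      apply hne
      rw [hCentry, h]; ring
    have hRRRoff : RRR i j = R i j := by rw [hRRRentry, if_neg hij, add_zero]
    have hi := hdiag i
    have hj := hdiag j
    have hsi : (0:ℝ) < Real.sqrt (R i i) := Real.sqrt_pos.2 hi
    have hsj : (0:ℝ) < Real.sqrt (R j j) := Real.sqrt_pos.2 hj
    have hsi' : (0:ℝ) < Real.sqrt (RRR i i) := Real.sqrt_pos.2 (hpos i)
    have hsj' : (0:ℝ) < Real.sqrt (RRR j j) := Real.sqrt_pos.2 (hpos j)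
    have hlti : Real.sqrt (R i i) < Real.sqrt (RRR i i) := by
      apply Real.sqrt_lt_sqrt hi.le
      rw [hRRRdiag]; linarith
    have hltj : Real.sqrt (R j j) < Real.sqrt (RRR j j) := by
      apply Real.sqrt_lt_sqrt hj.le
      rw [hRRRdiag]; linarith
    rw [hCentry, hCRRentry, hRRRoff]
    rw [abs_mul, abs_mul, abs_mul, abs_mul]
    rw [abs_of_pos (inv_pos.2 hsi), abs_of_pos (inv_pos.2 hsj),
      abs_of_pos (inv_pos.2 hsi'), abs_of_pos (inv_pos.2 hsj')]
    have habs : 0 < |R i j| := abs_pos.2 hRij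
    have h1 : (Real.sqrt (RRR i i))⁻¹ < (Real.sqrt (R i i))⁻¹ :=
      inv_strictAnti₀ hsi hlti
    have h2 : (Real.sqrt (RRR j j))⁻¹ < (Real.sqrt (R j j))⁻¹ :=
      inv_strictAnti₀ hsj hltj
    calc (Real.sqrt (RRR i i))⁻¹ * |R i j| * (Real.sqrt (RRR j j))⁻¹
        < (Real.sqrt (R i i))⁻¹ * |R i j| * (Real.sqrt (RRR j j))⁻¹ := by
          apply mul_lt_mul_of_pos_right _ (inv_pos.2 hsj')
          exact mul_lt_mul_of_pos_right h1 habs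
      _ < (Real.sqrt (R i i))⁻¹ * |R i j| * (Real.sqrt (R j j))⁻¹ := by
          apply mul_lt_mul_of_pos_left h2
          positivity
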